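/- If real numbers λ₁ ≥ λ₂ ≥ ... ≥ λₙ (with n ≥ 2) satisfy ∑ᵢ arctan(λᵢ) = Θ with Θ ≥ (n-2)π/2, then λ_{n-1} ≥ |λₙ|. -/
import Mathlib

open Real

/-- If λ₁ ≥ ⋯ ≥ λₙ (n ≥ 2) solve ∑ arctan λᵢ = Θ with Θ ≥ (n-2)π/2,
then λ_{n-1} ≥ |λₙ|. -/
theorem slag_lambda_pred_ge_abs_last (n : ℕ) (hn : 2 ≤ n) (lam : Fin n → ℝ) (Θ : ℝ)
    (hmono : ∀ i j : Fin n, i ≤ j → lam j ≤ lam i)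
    (heq : ∑ i, Real.arctan (lam i) = Θ)
    (hΘ : ((n : ℝ) - 2) * Real.pi / 2 ≤ Θ) :
    |lam ⟨n - 1, by omega⟩| ≤ lam ⟨n - 2, by omega⟩ := by
  set i₁ : Fin n := ⟨n - 2, by omega⟩
  set i₂ : Fin n := ⟨n - 1, by omega⟩
  have hne : i₁ ≠ i₂ := by
    simp only [i₁, i₂, Fin.mk.injEq, ne_eq]
    omega
  have hle : i₁ ≤ i₂ := by
    simp only [i₁, i₂, Fin.mk_le_mk]
    omega
  have hba : lam i₂ ≤ lam i₁ := hmono _ _ hle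
  set t : Finset (Fin n) := Finset.univ \ {i₁, i₂} with ht
  have hsplit : ∑ i ∈ t, Real.arctan (lam i) +
      ∑ i ∈ ({i₁, i₂} : Finset (Fin n)), Real.arctan (lam i) = Θ := by
    rw [← heq, ht]
    exact Finset.sum_sdiff (Finset.subset_univ _)
  have hpair : ∑ i ∈ ({i₁, i₂} : Finset (Fin n)), Real.arctan (lam i)
      = Real.arctan (lam i₁) + Real.arctan (lam i₂) := Finset.sum_pair hne
  have hcard : t.card = n - 2 := by
    rw [ht, Finset.card_sdiff_of_subset (Finset.subset_univ _), Finset.card_pair hne,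
      Finset.card_univ, Fintype.card_fin]
  have hbound : ∑ i ∈ t, Real.arctan (lam i) ≤ (t.card : ℝ) * (π / 2) := by
    have := Finset.sum_le_card_nsmul t (fun i => Real.arctan (lam i)) (π / 2)
      (fun i _ => (Real.arctan_lt_pi_div_two _).le)
    simpa [nsmul_eq_mul] using this
  have hcardR : (t.card : ℝ) = (n : ℝ) - 2 := by
    rw [hcard]
    have : (2 : ℕ) ≤ n := hn
    push_cast [Nat.cast_sub this]
    ring
  have hsum2 : 0 ≤ Real.arctan (lam i₁) + Real.arctan (lam i₂) := by
    rw [hpair] at hsplit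
    nlinarith [pi_pos]
  have h1 : Real.arctan (-lam i₂) ≤ Real.arctan (lam i₁) := by
    rw [Real.arctan_neg]
    linarith
  have h2 : -lam i₂ ≤ lam i₁ := Real.arctan_strictMono.le_iff_le.mp h1
  exact abs_le.mpr ⟨by linarith, hba⟩
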